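/- Structure of the quotient of H ∩ S by its central 2-torsion: the subgroup Z = {(I,I), (−I,−I), (I,−I), (−I,I)} is a central (hence normal) subgroup of H ∩ S, and the quotient group (H ∩ S)/Z is isomorphic to the semidirect product ℂˣ ⋊ ℤ/2ℤ, where the nontrivial element of ℤ/2ℤ acts on ℂˣ by inversion. In other words, there is a central extension 1 → μ₂ × μ₂ → H ∩ S → ℂˣ ⋊ ℤ/2ℤ → 1. -/

import Mathlib

open Matrix

set_option maxHeartbeats 1000000
set_option synthInstance.maxHeartbeats 400000

abbrev SL2 := Matrix.SpecialLinearGroup (Fin 2) ℂ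

instance : Fact (Even (Fintype.card (Fin 2))) := ⟨by simp⟩

/-- The subgroup `H = {(A, εA) : A ∈ SL(2,ℂ), ε ∈ {1,−1}}` of `SL(2,ℂ) × SL(2,ℂ)`. -/
def Hsub : Subgroup (SL2 × SL2) where
  carrier := {p | p.2 = p.1 ∨ p.2 = -p.1}
  one_mem' := Or.inl rfl
  mul_mem' := by
    intro a b ha hb
    simp only [Set.mem_setOf_eq, Prod.snd_mul, Prod.fst_mul] at *
    rcases ha with ha | ha <;> rcases hb with hb | hb <;> rw [ha, hb] <;>
      simp [mul_neg, neg_mul, neg_neg]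
  inv_mem' := by
    intro a ha
    simp only [Set.mem_setOf_eq, Prod.snd_inv, Prod.fst_inv] at *
    rcases ha with ha | ha <;> rw [ha] <;> simp [inv_neg]

/-- The subgroup `S` of `SL(2,ℂ) × SL(2,ℂ)` consisting of the pairs `(A,B)` with `A`
and `B` both diagonal or both antidiagonal. -/
def Ssub : Subgroup (SL2 × SL2) where
  carrier := {p |
    ((p.1 : Matrix (Fin 2) (Fin 2) ℂ) 0 1 = 0 ∧ (p.1 : Matrix (Fin 2) (Fin 2) ℂ) 1 0 = 0 ∧
     (p.2 : Matrix (Fin 2) (Fin 2) ℂ) 0 1 = 0 ∧ (p.2 : Matrix (Fin 2) (Fin 2) ℂ) 1 0 = 0) ∨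
    ((p.1 : Matrix (Fin 2) (Fin 2) ℂ) 0 0 = 0 ∧ (p.1 : Matrix (Fin 2) (Fin 2) ℂ) 1 1 = 0 ∧
     (p.2 : Matrix (Fin 2) (Fin 2) ℂ) 0 0 = 0 ∧ (p.2 : Matrix (Fin 2) (Fin 2) ℂ) 1 1 = 0)}
  one_mem' := by
    left
    simp [Matrix.SpecialLinearGroup.coe_one, Matrix.one_apply]
  mul_mem' := by
    intro a b ha hb
    rcases ha with ⟨h1, h2, h3, h4⟩ | ⟨h1, h2, h3, h4⟩ <;>
      rcases hb with ⟨g1, g2, g3, g4⟩ | ⟨g1, g2, g3, g4⟩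
    · left
      refine ⟨?_, ?_, ?_, ?_⟩ <;>
        simp [Prod.fst_mul, Prod.snd_mul, Matrix.mul_apply, Fin.sum_univ_two,
          h1, h2, h3, h4, g1, g2, g3, g4]
    · right
      refine ⟨?_, ?_, ?_, ?_⟩ <;>
        simp [Prod.fst_mul, Prod.snd_mul, Matrix.mul_apply, Fin.sum_univ_two,
          h1, h2, h3, h4, g1, g2, g3, g4]
    · right
      refine ⟨?_, ?_, ?_, ?_⟩ <;>
        simp [Prod.fst_mul, Prod.snd_mul, Matrix.mul_apply, Fin.sum_univ_two,
          h1, h2, h3, h4, g1, g2, g3, g4]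
    · left
      refine ⟨?_, ?_, ?_, ?_⟩ <;>
        simp [Prod.fst_mul, Prod.snd_mul, Matrix.mul_apply, Fin.sum_univ_two,
          h1, h2, h3, h4, g1, g2, g3, g4]
  inv_mem' := by
    intro a ha
    rcases ha with ⟨h1, h2, h3, h4⟩ | ⟨h1, h2, h3, h4⟩
    · left
      refine ⟨?_, ?_, ?_, ?_⟩ <;>
        simp [Prod.fst_inv, Prod.snd_inv, Matrix.SpecialLinearGroup.coe_inv,
          Matrix.adjugate_fin_two, h1, h2, h3, h4]
    · right
      refine ⟨?_, ?_, ?_, ?_⟩ <;>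
        simp [Prod.fst_inv, Prod.snd_inv, Matrix.SpecialLinearGroup.coe_inv,
          Matrix.adjugate_fin_two, h1, h2, h3, h4]

/-- The subgroup `H ∩ S` of `SL(2,ℂ) × SL(2,ℂ)`. -/
abbrev HS := (Hsub ⊓ Ssub : Subgroup (SL2 × SL2))

/-- The central subgroup `Z = {(I,I), (−I,−I), (I,−I), (−I,I)}` of `H ∩ S`. -/
def Zsub : Subgroup ↥HS where
  carrier := {x | (x : SL2 × SL2) = (1, 1) ∨ (x : SL2 × SL2) = (-1, -1) ∨
    (x : SL2 × SL2) = (1, -1) ∨ (x : SL2 × SL2) = (-1, 1)}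
  one_mem' := Or.inl rfl
  mul_mem' := by
    intro a b ha hb
    have hab : ((a * b : ↥HS) : SL2 × SL2) = (a : SL2 × SL2) * (b : SL2 × SL2) := rfl
    rcases ha with h | h | h | h <;> rcases hb with h' | h' | h' | h' <;>
      · simp only [Set.mem_setOf_eq, hab, h, h', Prod.mk_mul_mk,
          one_mul, mul_one, neg_mul, mul_neg, neg_neg]
        simp [Prod.mk.injEq]
  inv_mem' := by
    intro a ha
    have hai : ((a⁻¹ : ↥HS) : SL2 × SL2) = ((a : SL2 × SL2))⁻¹ := rfl
    rcases ha with h | h | h | h <;>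
      · simp only [Set.mem_setOf_eq, hai, h, Prod.inv_mk, inv_neg, inv_one]
        simp [Prod.mk.injEq]

instance Zsub_normal : Zsub.Normal := by
  constructor
  intro n hn g
  have hval : ((g * n * g⁻¹ : ↥HS) : SL2 × SL2)
      = (g : SL2 × SL2) * (n : SL2 × SL2) * ((g : SL2 × SL2))⁻¹ := rfl
  have c : ∀ (x e : SL2), e = 1 ∨ e = -1 → x * e * x⁻¹ = e := by
    rintro x e (rfl | rfl)
    · rw [mul_one, mul_inv_cancel]
    · rw [mul_neg_one, neg_mul, mul_inv_cancel]
  have conj : ∀ e1 e2 : SL2, (e1 = 1 ∨ e1 = -1) → (e2 = 1 ∨ e2 = -1) →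
      (g : SL2 × SL2) * (e1, e2) * ((g : SL2 × SL2))⁻¹ = (e1, e2) := by
    intro e1 e2 h1 h2
    have hc1 := c (g : SL2 × SL2).1 e1 h1
    have hc2 := c (g : SL2 × SL2).2 e2 h2
    apply Prod.ext <;>
      simp_all [Prod.fst_mul, Prod.snd_mul, Prod.fst_inv, Prod.snd_inv]
  rcases hn with h | h | h | h
  · exact Or.inl (by rw [hval, h]; exact conj 1 1 (Or.inl rfl) (Or.inl rfl))
  · exact Or.inr (Or.inl
      (by rw [hval, h]; exact conj (-1) (-1) (Or.inr rfl) (Or.inr rfl)))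
  · exact Or.inr (Or.inr (Or.inl
      (by rw [hval, h]; exact conj 1 (-1) (Or.inl rfl) (Or.inr rfl))))
  · exact Or.inr (Or.inr (Or.inr
      (by rw [hval, h]; exact conj (-1) 1 (Or.inr rfl) (Or.inl rfl))))

/-- The inversion automorphism of the abelian group `ℂˣ`. -/
def invAut : MulAut ℂˣ := MulEquiv.inv ℂˣ

lemma invAut_sq : invAut * invAut = 1 := by
  apply MulEquiv.ext
  intro x
  rw [MulAut.mul_apply, MulAut.one_apply]
  exact inv_inv x

/-- The homomorphism `ℤ/2ℤ →* MulAut N` determined by an automorphism of order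
dividing 2, sending the nontrivial element to that automorphism. -/
def hom2 {N : Type*} [Group N] (σ : MulAut N) (h : σ * σ = 1) :
    Multiplicative (ZMod 2) →* MulAut N where
  toFun e := σ ^ (Multiplicative.toAdd e).val
  map_one' := by simp
  map_mul' a b := by
    have h2 : σ ^ 2 = 1 := by rw [pow_two]; exact h
    show σ ^ (Multiplicative.toAdd (a * b)).val = _
    rw [toAdd_mul, ZMod.val_add, ← pow_eq_pow_mod _ h2, pow_add]

/-- The homomorphism `ℤ/2ℤ →* Aut(ℂˣ)` sending the nontrivial element to inversion. -/
def psi : Multiplicative (ZMod 2) →* MulAut ℂˣ := hom2 invAut invAut_sq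

namespace HSproof

abbrev Mat := Matrix (Fin 2) (Fin 2) ℂ

/-- The matrix of the first component. -/
def mA (x : ↥HS) : Mat := ((x : SL2 × SL2).1 : Mat)

lemma mA_mul (x y : ↥HS) : mA (x * y) = mA x * mA y := rfl

lemma mem_S' (x : ↥HS) :
    (mA x 0 1 = 0 ∧ mA x 1 0 = 0) ∨ (mA x 0 0 = 0 ∧ mA x 1 1 = 0) := by
  have h := (Subgroup.mem_inf.mp x.2).2
  rcases h with ⟨h1, h2, _, _⟩ | ⟨h1, h2, _, _⟩
  · exact Or.inl ⟨h1, h2⟩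
  · exact Or.inr ⟨h1, h2⟩

lemma HS_dichotomy (x : ↥HS) :
    (mA x 0 0 ≠ 0 ∧ mA x 0 1 = 0 ∧ mA x 1 0 = 0 ∧ mA x 1 1 = (mA x 0 0)⁻¹) ∨
    (mA x 0 0 = 0 ∧ mA x 1 1 = 0 ∧ mA x 0 1 ≠ 0 ∧ mA x 1 0 = -(mA x 0 1)⁻¹) := by
  have hdet : (mA x).det = 1 := (x : SL2 × SL2).1.prop
  rw [Matrix.det_fin_two] at hdet
  rcases mem_S' x with ⟨h1, h2⟩ | ⟨h1, h2⟩
  · left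
    rw [h1, h2] at hdet
    have h0 : mA x 0 0 ≠ 0 := by
      intro h; rw [h] at hdet; simp at hdet
    refine ⟨h0, h1, h2, ?_⟩
    field_simp
    linear_combination hdet
  · right
    rw [h1, h2] at hdet
    have h0 : mA x 0 1 ≠ 0 := by
      intro h; rw [h] at hdet; simp at hdet
    refine ⟨h1, h2, h0, ?_⟩
    field_simp
    linear_combination -hdet

lemma psi_one_apply (u : ℂˣ) : psi 1 u = u := by simp

lemma val_one_zmod : ((1 : ZMod 2)).val = 1 := rfl

lemma psi_ofAdd_one_apply (u : ℂˣ) : psi (Multiplicative.ofAdd (1 : ZMod 2)) u = u⁻¹ := by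
  show (invAut ^ ((Multiplicative.toAdd (Multiplicative.ofAdd (1 : ZMod 2)))).val) u = u⁻¹
  rw [toAdd_ofAdd, val_one_zmod, pow_one]
  rfl

/-- The underlying function of the homomorphism. -/
noncomputable def f0 (x : ↥HS) : ℂˣ ⋊[psi] Multiplicative (ZMod 2) :=
    if h : mA x 0 0 = 0 then
      ⟨Units.mk0 (mA x 0 1 ^ 2)
        (pow_ne_zero 2 (((HS_dichotomy x).resolve_left fun hc => hc.1 h).2.2.1)),
       Multiplicative.ofAdd 1⟩
    else ⟨Units.mk0 (mA x 0 0 ^ 2) (pow_ne_zero 2 h), 1⟩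

lemma f0_diag (x : ↥HS) (h : mA x 0 0 ≠ 0) :
    f0 x = ⟨Units.mk0 (mA x 0 0 ^ 2) (pow_ne_zero 2 h), 1⟩ := dif_neg h

lemma f0_anti (x : ↥HS) (h : mA x 0 0 = 0) :
    f0 x = ⟨Units.mk0 (mA x 0 1 ^ 2)
      (pow_ne_zero 2 (((HS_dichotomy x).resolve_left fun hc => hc.1 h).2.2.1)),
     Multiplicative.ofAdd 1⟩ := dif_pos h

/-- The homomorphism `H ∩ S →* ℂˣ ⋊ ℤ/2ℤ`. -/
noncomputable def F : ↥HS →* ℂˣ ⋊[psi] Multiplicative (ZMod 2) where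
  toFun := f0
  map_one' := by
    show f0 1 = 1
    have h1 : mA (1 : ↥HS) = 1 := rfl
    rw [f0_diag 1 (by simp [h1, Matrix.one_apply])]
    ext
    · simp [h1, Matrix.one_apply]
    · rfl
  map_mul' x y := by
    show f0 (x * y) = f0 x * f0 y
    have hm := mA_mul x y
    rcases HS_dichotomy x with ⟨hx0, hx1, hx2, hx3⟩ | ⟨hx0, hx1, hx2, hx3⟩ <;>
      rcases HS_dichotomy y with ⟨hy0, hy1, hy2, hy3⟩ | ⟨hy0, hy1, hy2, hy3⟩
    · -- diag * diag
      have e00 : mA (x * y) 0 0 = mA x 0 0 * mA y 0 0 := by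
        rw [hm, Matrix.mul_apply, Fin.sum_univ_two, hx1, hy2]; ring
      rw [f0_diag _ (by rw [e00]; exact mul_ne_zero hx0 hy0), f0_diag _ hx0, f0_diag _ hy0]
      ext
      · simp only [SemidirectProduct.mul_left, psi_one_apply, Units.val_mul, Units.val_mk0]
        rw [e00]; ring
      · simp
    · -- diag * anti
      have e00 : mA (x * y) 0 0 = 0 := by
        rw [hm, Matrix.mul_apply, Fin.sum_univ_two, hx1, hy0]; ring
      have e01 : mA (x * y) 0 1 = mA x 0 0 * mA y 0 1 := by
        rw [hm, Matrix.mul_apply, Fin.sum_univ_two, hx1, hy1]; ring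
      rw [f0_anti _ e00, f0_diag _ hx0, f0_anti _ hy0]
      ext
      · simp only [SemidirectProduct.mul_left, psi_one_apply, Units.val_mul, Units.val_mk0]
        rw [e01]; ring
      · simp
    · -- anti * diag
      have e00 : mA (x * y) 0 0 = 0 := by
        rw [hm, Matrix.mul_apply, Fin.sum_univ_two, hx0, hy2]; ring
      have e01 : mA (x * y) 0 1 = mA x 0 1 * mA y 1 1 := by
        rw [hm, Matrix.mul_apply, Fin.sum_univ_two, hx0]; ring
      rw [f0_anti _ e00, f0_anti _ hx0, f0_diag _ hy0]
      ext
      · simp only [SemidirectProduct.mul_left, psi_ofAdd_one_apply, Units.val_mul,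
          Units.val_inv_eq_inv_val, Units.val_mk0]
        rw [e01, hy3, mul_pow, inv_pow]
      · simp
    · -- anti * anti
      have e00 : mA (x * y) 0 0 = mA x 0 1 * mA y 1 0 := by
        rw [hm, Matrix.mul_apply, Fin.sum_univ_two, hx0]; ring
      have hne : mA (x * y) 0 0 ≠ 0 := by
        rw [e00, hy3]
        exact mul_ne_zero hx2 (neg_ne_zero.mpr (inv_ne_zero hy2))
      rw [f0_diag _ hne, f0_anti _ hx0, f0_anti _ hy0]
      ext
      · simp only [SemidirectProduct.mul_left, psi_ofAdd_one_apply, Units.val_mul,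
          Units.val_inv_eq_inv_val, Units.val_mk0]
        rw [e00, hy3, mul_pow, neg_sq, inv_pow]
      · show Multiplicative.toAdd (1 : Multiplicative (ZMod 2)) = Multiplicative.toAdd (Multiplicative.ofAdd (1 : ZMod 2) * Multiplicative.ofAdd (1 : ZMod 2))
        decide

lemma F_diag (x : ↥HS) (h : mA x 0 0 ≠ 0) :
    F x = ⟨Units.mk0 (mA x 0 0 ^ 2) (pow_ne_zero 2 h), 1⟩ := f0_diag x h

lemma F_right_diag (x : ↥HS) (h : mA x 0 0 ≠ 0) : (F x).right = 1 := by
  rw [F_diag x h]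

lemma F_anti (x : ↥HS) (h : mA x 0 0 = 0) : (F x).right = Multiplicative.ofAdd 1 := by
  show (f0 x).right = _
  rw [f0_anti x h]

lemma ker_F : F.ker = Zsub := by
  ext x
  constructor
  · intro hx
    rw [MonoidHom.mem_ker] at hx
    rcases HS_dichotomy x with ⟨hx0, hx1, hx2, hx3⟩ | ⟨hx0, hx1, hx2, hx3⟩
    · have hF := F_diag x hx0
      rw [hx] at hF
      have hu : (1 : ℂˣ) = Units.mk0 (mA x 0 0 ^ 2) (pow_ne_zero 2 hx0) :=
        congrArg SemidirectProduct.left hF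
      have hsq : mA x 0 0 * mA x 0 0 = 1 := by
        have := congrArg Units.val hu
        simp only [Units.val_one, Units.val_mk0] at this
        rw [← pow_two]; exact this.symm
      have ha : mA x 0 0 = 1 ∨ mA x 0 0 = -1 := mul_self_eq_one_iff.mp hsq
      have hH := (Subgroup.mem_inf.mp x.2).1
      have hmem : ((x : SL2 × SL2).1 = 1 ∨ (x : SL2 × SL2).1 = -1) := by
        rcases ha with ha | ha
        · left
          apply Subtype.ext
          show mA x = _
          ext i j
          fin_cases i <;> fin_cases j <;>
            simp [ha, hx1, hx2, hx3, Matrix.SpecialLinearGroup.coe_one, Matrix.one_apply]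
        · right
          apply Subtype.ext
          show mA x = _
          ext i j
          fin_cases i <;> fin_cases j <;>
            simp [ha, hx1, hx2, hx3, Matrix.one_apply, inv_neg, inv_one]
      rcases hH with hH | hH <;> rcases hmem with h1 | h1
      · exact Or.inl (Prod.ext h1 (by rw [hH, h1]))
      · exact Or.inr (Or.inl (Prod.ext h1 (by rw [hH, h1])))
      · exact Or.inr (Or.inr (Or.inl (Prod.ext h1 (by rw [hH, h1]))))
      · exact Or.inr (Or.inr (Or.inr (Prod.ext h1 (by rw [hH, h1, neg_neg]))))
    · exfalso
      have := F_anti x hx0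
      rw [hx] at this
      have : (1 : Multiplicative (ZMod 2)) = Multiplicative.ofAdd 1 := this
      exact absurd this (by decide)
  · intro hx
    rw [MonoidHom.mem_ker]
    have key : ∀ h1 : mA x 0 0 ≠ 0, mA x 0 0 ^ 2 = 1 → F x = 1 := by
      intro h1 h2
      rw [F_diag x h1]
      ext
      · simp [h2]
      · rfl
    rcases hx with h | h | h | h <;>
    · have hmA : mA x = _ := congrArg (fun p : SL2 × SL2 => (p.1 : Mat)) h
      simp only at hmA
      refine key ?_ ?_ <;>
        simp [hmA, Matrix.one_apply]

lemma F_anti_full (x : ↥HS) (h : mA x 0 0 = 0) (h' : mA x 0 1 ≠ 0) :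
    F x = ⟨Units.mk0 (mA x 0 1 ^ 2) (pow_ne_zero 2 h'), Multiplicative.ofAdd 1⟩ := by
  show f0 x = _
  rw [f0_anti x h]

lemma F_surj : Function.Surjective F := by
  rintro ⟨u, t⟩
  obtain ⟨a, ha⟩ := IsAlgClosed.exists_pow_nat_eq (u : ℂ) zero_lt_two
  have ha0 : a ≠ 0 := by
    intro h; rw [h] at ha; simp at ha; exact u.ne_zero ha.symm
  rcases (by decide : ∀ s : Multiplicative (ZMod 2),
      s = 1 ∨ s = Multiplicative.ofAdd 1) t with rfl | rfl
  · obtain ⟨D, hD⟩ : ∃ D : SL2, (D : Mat) = !![a, 0; 0, a⁻¹] :=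
      ⟨⟨!![a, 0; 0, a⁻¹], by rw [Matrix.det_fin_two_of]; field_simp; norm_num⟩, rfl⟩
    have hmem : ((D, D) : SL2 × SL2) ∈ HS := by
      refine Subgroup.mem_inf.mpr ⟨Or.inl rfl, Or.inl ⟨?_, ?_, ?_, ?_⟩⟩ <;> simp [hD]
    refine ⟨⟨(D, D), hmem⟩, ?_⟩
    have hA : mA (⟨(D, D), hmem⟩ : ↥HS) 0 0 = a := by
      show (D : Mat) 0 0 = a
      simp [hD]
    rw [F_diag _ (by rw [hA]; exact ha0)]
    ext
    · show mA (⟨(D, D), hmem⟩ : ↥HS) 0 0 ^ 2 = (u : ℂ)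
      rw [hA, ha]
    · rfl
  · obtain ⟨D, hD⟩ : ∃ D : SL2, (D : Mat) = !![0, a; -a⁻¹, 0] :=
      ⟨⟨!![0, a; -a⁻¹, 0], by rw [Matrix.det_fin_two_of]; field_simp; norm_num⟩, rfl⟩
    have hmem : ((D, D) : SL2 × SL2) ∈ HS := by
      refine Subgroup.mem_inf.mpr ⟨Or.inl rfl, Or.inr ⟨?_, ?_, ?_, ?_⟩⟩ <;> simp [hD]
    refine ⟨⟨(D, D), hmem⟩, ?_⟩
    have h0 : mA (⟨(D, D), hmem⟩ : ↥HS) 0 0 = 0 := by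
      show (D : Mat) 0 0 = 0
      simp [hD]
    have h1 : mA (⟨(D, D), hmem⟩ : ↥HS) 0 1 = a := by
      show (D : Mat) 0 1 = a
      simp [hD]
    rw [F_anti_full _ h0 (by rw [h1]; exact ha0)]
    ext
    · show mA (⟨(D, D), hmem⟩ : ↥HS) 0 1 ^ 2 = (u : ℂ)
      rw [h1, ha]
    · rfl

end HSproof

/-- **Structure of the quotient of `H ∩ S` by its central 2-torsion:** the subgroup
`Z = {(I,I), (−I,−I), (I,−I), (−I,I)}` is central in `H ∩ S`, and the quotient
`(H ∩ S)/Z` is isomorphic to `ℂˣ ⋊ ℤ/2ℤ`, the nontrivial element of `ℤ/2ℤ` acting on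
`ℂˣ` by inversion; i.e. there is a central extension
`1 → μ₂ × μ₂ → H ∩ S → ℂˣ ⋊ ℤ/2ℤ → 1`. -/



theorem H_inf_S_central_extension :
    Zsub ≤ Subgroup.center ↥HS ∧
    Nonempty ((↥HS ⧸ Zsub) ≃* (ℂˣ ⋊[psi] Multiplicative (ZMod 2))) := by
  constructor
  · intro z hz
    rw [Subgroup.mem_center_iff]
    intro g
    apply Subtype.ext
    show (g : SL2 × SL2) * (z : SL2 × SL2) = (z : SL2 × SL2) * (g : SL2 × SL2)
    rcases hz with h | h | h | h <;> rw [h] <;>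
      exact Prod.ext (by simp) (by simp)
  · exact ⟨(QuotientGroup.quotientMulEquivOfEq HSproof.ker_F.symm).trans
      (QuotientGroup.quotientKerEquivOfSurjective HSproof.F HSproof.F_surj)⟩
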